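/- arXiv:2601.00401 — 2 statements merged into one kernel-verified Lean document; each statement's English description precedes it below -/
import Mathlib

section
/- For every α, β with 0 < α < 1 and 0 < β < 1/3, and every Luzin set L ⊆ ℝ, Bob has a winning strategy in Schmidt's (α,β)-game with target L. -/
namespace Schmidt

/-- A closed interval, given by its two endpoints. -/
abbrev Ivl := ℝ × ℝ

/-- The diameter (length) of an interval. -/
def diam (I : Ivl) : ℝ := I.2 - I.1

/-- The set of points of an interval. -/
def toSet (I : Ivl) : Set ℝ := Set.Icc I.1 I.2

/-- `Sub I J` means the interval `I` is contained in the interval `J`. -/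
def Sub (I J : Ivl) : Prop := toSet I ⊆ toSet J

/-- A strategy: a function producing a move from the finite sequence of
the opponent's moves so far. -/
abbrev Strategy := List Ivl → Ivl

/-- The list of Bob's moves `B 0, …, B n`. -/
def hist (B : ℕ → Ivl) (n : ℕ) : List Ivl := List.ofFn (fun i : Fin (n + 1) => B i)

/-- Bob's sequence of moves `B` is a legal play against Alice's strategy `σ`
in the `(α,β)`-game: `B 0` has positive diameter and each `B (n+1)` is a
subinterval of Alice's previous move `σ (hist B n)` of `β` times its diameter. -/
def BobPlays (β : ℝ) (σ : Strategy) (B : ℕ → Ivl) : Prop :=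
  0 < diam (B 0) ∧
  ∀ n, Sub (B (n + 1)) (σ (hist B n)) ∧ diam (B (n + 1)) = β * diam (σ (hist B n))

/-- `σ` is a legal strategy for Alice in the `(α,β)`-game: whenever Bob's
moves so far are legal, Alice's response is a subinterval of Bob's last move
of `α` times its diameter. -/
def AliceLegal (α β : ℝ) (σ : Strategy) : Prop :=
  ∀ B : ℕ → Ivl, ∀ n : ℕ, 0 < diam (B 0) →
    (∀ m, m < n → Sub (B (m + 1)) (σ (hist B m)) ∧
      diam (B (m + 1)) = β * diam (σ (hist B m))) →
    Sub (σ (hist B n)) (B n) ∧ diam (σ (hist B n)) = α * diam (B n)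

/-- `σ` is a winning strategy for Alice in Schmidt's `(α,β)`-game with target `T`:
it is legal, and in every run against it every point of the intersection of
Alice's moves lies in `T`. -/
def AliceWinsWith (α β : ℝ) (T : Set ℝ) (σ : Strategy) : Prop :=
  AliceLegal α β σ ∧
  ∀ B : ℕ → Ivl, BobPlays β σ B →
    ∀ x : ℝ, (∀ n, x ∈ toSet (σ (hist B n))) → x ∈ T

/-- `T` is `(α,β)`-winning: Alice has a winning strategy. -/
def Winning (α β : ℝ) (T : Set ℝ) : Prop := ∃ σ, AliceWinsWith α β T σ

/-- The list of Alice's moves `A 0, …, A (n-1)`. -/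
def histA (A : ℕ → Ivl) (n : ℕ) : List Ivl := List.ofFn (fun i : Fin n => A i)

/-- Alice's sequence of moves `A` is a legal play against Bob's strategy `τ`. -/
def AlicePlays (α : ℝ) (τ : Strategy) (A : ℕ → Ivl) : Prop :=
  ∀ n, Sub (A n) (τ (histA A n)) ∧ diam (A n) = α * diam (τ (histA A n))

/-- `τ` is a legal strategy for Bob in the `(α,β)`-game. -/
def BobLegal (α β : ℝ) (τ : Strategy) : Prop :=
  0 < diam (τ []) ∧
  ∀ A : ℕ → Ivl, ∀ n : ℕ,
    (∀ m, m ≤ n → Sub (A m) (τ (histA A m)) ∧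
      diam (A m) = α * diam (τ (histA A m))) →
    Sub (τ (histA A (n + 1))) (A n) ∧ diam (τ (histA A (n + 1))) = β * diam (A n)

/-- `τ` is a winning strategy for Bob in Schmidt's `(α,β)`-game with target `T`. -/
def BobWinsWith (α β : ℝ) (T : Set ℝ) (τ : Strategy) : Prop :=
  BobLegal α β τ ∧
  ∀ A : ℕ → Ivl, AlicePlays α τ A →
    ∀ x : ℝ, (∀ n, x ∈ toSet (A n)) → x ∉ T

/-- Bob has a winning strategy in the `(α,β)`-game with target `T`. -/
def BobWinning (α β : ℝ) (T : Set ℝ) : Prop := ∃ τ, BobWinsWith α β T τ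

/-- `V` is a Vitali set: it contains exactly one representative of each
coset of `ℚ` in `ℝ`. -/
def IsVitali (V : Set ℝ) : Prop :=
  ∀ x : ℝ, ∃! v : ℝ, v ∈ V ∧ ∃ q : ℚ, x - v = (q : ℝ)

/-- `P` is a partial Vitali set: it contains at most one representative of
each coset of `ℚ` in `ℝ`. -/
def IsPartialVitali (P : Set ℝ) : Prop :=
  ∀ x ∈ P, ∀ y ∈ P, (∃ q : ℚ, x - y = (q : ℝ)) → x = y

/-- `T` is `(α,β,I)`-winning: Alice has a winning strategy in Schmidt's
`(α,β)`-game with target `T` when Bob's first move is required to be `I`. -/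
def WinningFrom (α β : ℝ) (T : Set ℝ) (I : Ivl) : Prop :=
  ∃ σ : Strategy,
    (∀ B : ℕ → Ivl, B 0 = I → ∀ n : ℕ,
      (∀ m, m < n → Sub (B (m + 1)) (σ (hist B m)) ∧
        diam (B (m + 1)) = β * diam (σ (hist B m))) →
      Sub (σ (hist B n)) (B n) ∧ diam (σ (hist B n)) = α * diam (B n)) ∧
    (∀ B : ℕ → Ivl, B 0 = I → BobPlays β σ B →
      ∀ x : ℝ, (∀ n, x ∈ toSet (σ (hist B n))) → x ∈ T)


/-- `L` is a Luzin set: its intersection with every meager set is countable. -/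
def IsLuzin (L : Set ℝ) : Prop :=
  ∀ A : Set ℝ, IsMeagre A → (L ∩ A).Countable


/-! ### Auxiliary construction for Bob's winning strategy -/

/-- Grid spacing at stage `n`. -/
noncomputable def gseq (α β : ℝ) (n : ℕ) : ℝ := (1 - β) * (α * (α * β) ^ n)

/-- Forbidden-neighbourhood radius at stage `n`. -/
noncomputable def eseq (α β : ℝ) (n : ℕ) : ℝ := (1 - 3 * β) * (α * (α * β) ^ n) / 4

/-- Points avoiding the `eseq`-neighbourhood of the stage-`n` grid. -/
def Fset (α β : ℝ) (n : ℕ) : Set ℝ := {x | ∀ k : ℤ, eseq α β n ≤ |x - k * gseq α β n|}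

/-- The Cantor-like nowhere dense set into which Bob steers the game. -/
def Pset (α β : ℝ) : Set ℝ := ⋂ n, Fset α β n

lemma grid_avoid {g ε y : ℝ} (hg : 0 < g) (k : ℤ) (h1 : ε ≤ y - k * g)
    (h2 : y - k * g ≤ g - ε) (m : ℤ) : ε ≤ |y - m * g| := by
  rcases le_or_gt (m : ℝ) (k : ℝ) with h | h
  · refine le_trans ?_ (le_abs_self _)
    nlinarith [mul_nonneg (sub_nonneg.2 h) hg.le]
  · have hm : (k : ℝ) + 1 ≤ (m : ℝ) := by
      have h' : k < m := by exact_mod_cast h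
      exact_mod_cast Int.lt_iff_add_one_le.1 h'
    refine le_trans ?_ (neg_le_abs _)
    nlinarith [mul_nonneg (sub_nonneg.2 hm) hg.le]

lemma exists_good_start (u a g ε l x : ℝ) (hε0 : 0 < ε) (hl0 : 0 < l)
    (hkey : 2 * ε + 2 * l < g) (hgl : g + l = a) :
    ∃ s : ℝ, u ≤ s ∧ s + l ≤ u + a ∧
      (∀ y, s ≤ y → y ≤ s + l → ∀ m : ℤ, ε ≤ |y - m * g|) ∧ x ∉ Set.Icc s (s + l) := by
  have hg0 : 0 < g := by linarith
  set k : ℤ := ⌈(u - ε) / g⌉ with hk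
  have hk1 : u - ε ≤ k * g := by
    have h := Int.le_ceil ((u - ε) / g)
    calc u - ε = ((u - ε) / g) * g := by field_simp
    _ ≤ k * g := by nlinarith
  have hk2 : (k : ℝ) * g < u - ε + g := by
    have h := Int.ceil_lt_add_one ((u - ε) / g)
    calc (k : ℝ) * g < ((u - ε) / g + 1) * g := by nlinarith
    _ = u - ε + g := by field_simp
  have hd0 : 0 < (g - 2 * ε - 2 * l) / 2 := by linarith
  by_cases hx : x ∈ Set.Icc (k * g + ε) (k * g + ε + l)
  · by_cases h2 : (k * g + ε + l + (g - 2 * ε - 2 * l) / 2) + l ≤ u + a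
    · refine ⟨k * g + ε + l + (g - 2 * ε - 2 * l) / 2, by linarith, h2, ?_, ?_⟩
      · intro y hy1 hy2 m
        exact grid_avoid hg0 k (by linarith) (by linarith) m
      · intro hmem
        have := hmem.1
        have := hx.2
        linarith
    · refine ⟨k * g + ε + l + (g - 2 * ε - 2 * l) / 2 - g, ?_, by linarith, ?_, ?_⟩
      · linarith
      · intro y hy1 hy2 m
        refine grid_avoid hg0 (k - 1) ?_ ?_ m <;> push_cast <;> linarith
      · intro hmem
        have := hmem.2
        have := hx.1
        linarith
  · refine ⟨k * g + ε, by linarith, by linarith, ?_, hx⟩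
    intro y hy1 hy2 m
    exact grid_avoid hg0 k (by linarith) (by linarith) m

lemma exists_sel {α β : ℝ} (hα0 : 0 < α) (hβ0 : 0 < β) (hβ13 : β < 1/3)
    (n : ℕ) (A : Ivl) (x : ℝ) (hA : diam A = α * (α * β) ^ n) :
    ∃ B : Ivl, Sub B A ∧ diam B = β * diam A ∧ toSet B ⊆ Fset α β n ∧ x ∉ toSet B := by
  have ha0 : 0 < α * (α * β) ^ n := by positivity
  have hε0 : 0 < eseq α β n := by
    have : (0:ℝ) < 1 - 3 * β := by linarith
    rw [eseq]; positivity
  have hkey : 2 * eseq α β n + 2 * (β * (α * (α * β) ^ n)) < gseq α β n := by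
    rw [eseq, gseq]; nlinarith
  have hgl : gseq α β n + β * (α * (α * β) ^ n) = α * (α * β) ^ n := by rw [gseq]; ring
  obtain ⟨s, hs1, hs2, hs3, hs4⟩ := exists_good_start A.1 (α * (α * β) ^ n) (gseq α β n)
    (eseq α β n) (β * (α * (α * β) ^ n)) x hε0 (by positivity) hkey hgl
  have hA2 : A.2 = A.1 + α * (α * β) ^ n := by
    have : A.2 - A.1 = α * (α * β) ^ n := hA
    linarith
  refine ⟨(s, s + β * (α * (α * β) ^ n)), ?_, ?_, ?_, ?_⟩
  · rw [Sub, toSet, toSet, hA2]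
    exact Set.Icc_subset_Icc hs1 hs2
  · show s + β * (α * (α * β) ^ n) - s = β * (A.2 - A.1)
    rw [hA2]; ring
  · intro y hy
    exact hs3 y hy.1 hy.2
  · exact hs4

lemma isMeagre_Pset {α β : ℝ} (hα0 : 0 < α) (hα1 : α < 1) (hβ0 : 0 < β)
    (hβ13 : β < 1/3) : IsMeagre (Pset α β) := by
  have hclosed : IsClosed (Pset α β) := by
    refine isClosed_iInter fun n => ?_
    have : Fset α β n = ⋂ k : ℤ, {x : ℝ | eseq α β n ≤ |x - k * gseq α β n|} := by
      ext y; simp [Fset, Set.mem_iInter]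
    rw [this]
    exact isClosed_iInter fun k =>
      isClosed_le continuous_const ((continuous_id.sub continuous_const).abs)
  have hint : interior (Pset α β) = ∅ := by
    by_contra h
    obtain ⟨x, hx⟩ := Set.nonempty_iff_ne_empty.2 h
    obtain ⟨r, hr0, hr⟩ := Metric.mem_nhds_iff.1 (mem_interior_iff_mem_nhds.1 hx)
    have hab0 : 0 < α * β := by positivity
    have hab1 : α * β < 1 := by nlinarith
    have hC : 0 < (1 - β) * α := by nlinarith
    obtain ⟨n, hn⟩ := exists_pow_lt_of_lt_one (show 0 < r / ((1 - β) * α) by positivity) hab1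
    have hgr : gseq α β n < r := by
      rw [gseq]
      calc (1 - β) * (α * (α * β) ^ n) = ((1 - β) * α) * (α * β) ^ n := by ring
      _ < ((1 - β) * α) * (r / ((1 - β) * α)) := mul_lt_mul_of_pos_left hn hC
      _ = r := by field_simp [show (1:ℝ) - β ≠ 0 by linarith]
    have hg0 : 0 < gseq α β n := by
      have hp : (0:ℝ) < α * (α * β) ^ n := by positivity
      rw [gseq]; nlinarith
    have hε0 : 0 < eseq α β n := by
      have : (0:ℝ) < 1 - 3 * β := by linarith
      rw [eseq]; positivity
    set g := gseq α β n with hg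
    set y : ℝ := (⌊x / g⌋ : ℝ) * g with hy
    have h1 : y ≤ x := by
      rw [hy]
      have := Int.floor_le (x / g)
      calc (⌊x / g⌋ : ℝ) * g ≤ (x / g) * g := by nlinarith
      _ = x := by field_simp
    have h2 : x < y + g := by
      rw [hy]
      have := Int.lt_floor_add_one (x / g)
      have : x / g * g < ((⌊x / g⌋ : ℝ) + 1) * g := by nlinarith
      have hx' : x = x / g * g := by field_simp
      linarith [hx'.le, hx'.ge]
    have hyP : y ∈ Pset α β := by
      apply hr
      rw [Metric.mem_ball, Real.dist_eq, abs_sub_lt_iff]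
      constructor <;> linarith
    have := Set.mem_iInter.1 hyP n ⌊x / g⌋
    simp only [← hg, hy, sub_self, abs_zero] at this
    linarith
  rw [IsMeagre]
  exact residual_of_dense_open hclosed.isOpen_compl
    (interior_eq_empty_iff_dense_compl.1 hint)

/-- for `0 < α < 1`, `0 < β < 1/3`, Bob has a winning strategy
in the `(α,β)`-game on any Luzin set. -/
theorem stmt17 (α β : ℝ) (hα0 : 0 < α) (hα1 : α < 1) (hβ0 : 0 < β)
    (hβ13 : β < 1/3) (L : Set ℝ) (hL : IsLuzin L) :
    BobWinning α β L := by
  -- enumeration of the countable set `L ∩ Pset α β`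
  obtain ⟨f, hf⟩ : ∃ f : ℕ → ℝ, L ∩ Pset α β ⊆ Set.range f := by
    have hc := hL _ (isMeagre_Pset hα0 hα1 hβ0 hβ13)
    rcases Set.eq_empty_or_nonempty (L ∩ Pset α β) with h | h
    · exact ⟨fun _ => 0, by rw [h]; exact Set.empty_subset _⟩
    · obtain ⟨f, hfe⟩ := hc.exists_eq_range h
      exact ⟨f, hfe.le⟩
  -- Bob's selection function
  have main : ∀ (n : ℕ) (A : Ivl), ∃ B : Ivl, diam A = α * (α * β) ^ n →
      (Sub B A ∧ diam B = β * diam A ∧ toSet B ⊆ Fset α β n ∧ f n ∉ toSet B) := by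
    intro n A
    by_cases h : diam A = α * (α * β) ^ n
    · obtain ⟨B, hB⟩ := exists_sel hα0 hβ0 hβ13 n A (f n) h
      exact ⟨B, fun _ => hB⟩
    · exact ⟨A, fun h' => absurd h' h⟩
  choose sel hsel using main
  -- Bob's strategy
  set τ : Strategy := fun h =>
    if h.length = 0 then ((0:ℝ), (1:ℝ))
    else sel (h.length - 1) (h.getD (h.length - 1) ((0:ℝ), (0:ℝ))) with hτ
  have hτnil : τ [] = ((0:ℝ), (1:ℝ)) := by simp [hτ]
  have hτs : ∀ (A : ℕ → Ivl) (n : ℕ), τ (histA A (n + 1)) = sel n (A n) := by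
    intro A n
    have hlen : (histA A (n + 1)).length = n + 1 := by simp [histA]
    have hget : (histA A (n + 1)).getD n ((0:ℝ), (0:ℝ)) = A n := by
      rw [histA, List.getD_eq_getElem?_getD, List.getElem?_ofFn]
      rw [dif_pos (by omega : n < n + 1)]
      rfl
    rw [hτ]
    simp only [hlen]
    rw [if_neg (by omega)]
    simp only [Nat.add_sub_cancel, hget]
  have hdiam0 : ∀ A : ℕ → Ivl, diam (τ (histA A 0)) = 1 := by
    intro A
    have : histA A 0 = [] := by simp [histA]
    rw [this, hτnil]
    norm_num [diam]
  have keydiam : ∀ (A : ℕ → Ivl) (n : ℕ),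
      (∀ m, m ≤ n → Sub (A m) (τ (histA A m)) ∧
        diam (A m) = α * diam (τ (histA A m))) →
      ∀ m, m ≤ n → diam (τ (histA A m)) = (α * β) ^ m := by
    intro A n hleg m
    induction m with
    | zero => intro _; simpa using hdiam0 A
    | succ m ih =>
      intro hm
      have hmn : m ≤ n := by omega
      have h1 : diam (τ (histA A m)) = (α * β) ^ m := ih hmn
      have h2 : diam (A m) = α * (α * β) ^ m := by rw [(hleg m hmn).2, h1]
      rw [hτs A m, (hsel m (A m) h2).2.1, h2]
      ring
  refine ⟨τ, ⟨?_, ?_⟩, ?_⟩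
  · rw [hτnil]; norm_num [diam]
  · intro A n hleg
    have hd := keydiam A n hleg n le_rfl
    have h2 : diam (A n) = α * (α * β) ^ n := by rw [(hleg n le_rfl).2, hd]
    have h := hsel n (A n) h2
    rw [hτs A n]
    exact ⟨h.1, by rw [h.2.1]⟩
  · intro A hplays x hx hxL
    have hdA : ∀ n, diam (A n) = α * (α * β) ^ n := fun n => by
      rw [(hplays n).2, keydiam A n (fun m _ => hplays m) n le_rfl]
    have hxB : ∀ n, x ∈ toSet (sel n (A n)) := fun n => by
      have h := (hplays (n + 1)).1
      rw [hτs A n] at h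
      exact h (hx (n + 1))
    have hxP : x ∈ Pset α β :=
      Set.mem_iInter.2 fun n => (hsel n (A n) (hdA n)).2.2.1 (hxB n)
    obtain ⟨n, hn⟩ := hf ⟨hxL, hxP⟩
    exact (hsel n (A n) (hdA n)).2.2.2 (hn ▸ hxB n)


end Schmidt
end

section
/- Let 0 < α < 1 and 0 < β < 1/3. Inside the unit interval, construct a Cantor-like set P as follows: at stage 0 take finitely many pairwise disjoint closed intervals of length αβ separated by gaps of length (α − 3αβ)/3 > 0; at stage n+1, inside each stage-n interval of length (αβ)ⁿ place pairwise disjoint closed intervals of length (αβ)^{n+1} separated by gaps of length (αβ)ⁿ·(α − 3αβ)/3. Then: (1) P = ⋂ₙ (union of stage-n intervals) has Lebesgue measure zero; (2) P is nowhere dense; and (3) every closed interval of length (αβ)^{n-1}·α contained in a stage-(n−1) interval contains at least two stage-n intervals of P. -/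
namespace Schmidt

noncomputable def cantorAux (α β : ℝ) (M : ℕ) : ℕ → Finset ℝ
  | 0 => {0}
  | n + 1 => (cantorAux α β M n).biUnion fun y =>
      (Finset.range (M + 1)).image fun k : ℕ => y + (k : ℝ) * (α * (α * β) ^ n / 3)

set_option maxHeartbeats 2000000 in
/-- the Cantor-like set used against Luzin/Sierpinski sets.
`S n` records the left endpoints of the stage-`n` intervals, which have
length `(αβ)ⁿ`; stage `0` is the unit interval.  Stage-`(n+1)` intervals sit
inside stage-`n` intervals, are separated by gaps of length at least
`(αβ)ⁿ(α - 3αβ)/3`, every subinterval of a stage-`n` interval of length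
`α(αβ)ⁿ` contains at least two stage-`(n+1)` intervals, and the resulting
intersection `P` has Lebesgue measure zero and is nowhere dense. -/
theorem stmt18 (α β : ℝ) (hα0 : 0 < α) (hα1 : α < 1) (hβ0 : 0 < β)
    (hβ13 : β < 1/3) :
    ∃ S : ℕ → Finset ℝ,
      S 0 = {0} ∧
      (∀ n, ∀ x ∈ S (n + 1), ∃ y ∈ S n,
        Set.Icc x (x + (α * β) ^ (n + 1)) ⊆ Set.Icc y (y + (α * β) ^ n)) ∧
      (∀ n, ∀ x ∈ S (n + 1), ∀ y ∈ S (n + 1), x ≠ y →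
        (α * β) ^ (n + 1) + (α * β) ^ n * (α - 3 * α * β) / 3 ≤ |x - y|) ∧
      (∀ n, ∀ y ∈ S n, ∀ t : ℝ,
        Set.Icc t (t + α * (α * β) ^ n) ⊆ Set.Icc y (y + (α * β) ^ n) →
        ∃ x₁ ∈ S (n + 1), ∃ x₂ ∈ S (n + 1), x₁ ≠ x₂ ∧
          Set.Icc x₁ (x₁ + (α * β) ^ (n + 1)) ⊆ Set.Icc t (t + α * (α * β) ^ n) ∧
          Set.Icc x₂ (x₂ + (α * β) ^ (n + 1)) ⊆ Set.Icc t (t + α * (α * β) ^ n)) ∧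
      MeasureTheory.volume
        (⋂ n, ⋃ x ∈ S n, Set.Icc x (x + (α * β) ^ n)) = 0 ∧
      IsNowhereDense (⋂ n, ⋃ x ∈ S n, Set.Icc x (x + (α * β) ^ n)) := by
  set c : ℝ := α * β with hc
  have hc0 : 0 < c := mul_pos hα0 hβ0
  have hca : 3 * c < α := by rw [hc]; nlinarith
  have hc1 : c < 1 := by nlinarith
  set M : ℕ := ⌊3 * (1 - c) / α⌋₊ with hMdef
  have hx0 : 0 ≤ 3 * (1 - c) / α := div_nonneg (by nlinarith) hα0.le
  have hM1 : (M : ℝ) * (α / 3) ≤ 1 - c := by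
    have h := Nat.floor_le hx0
    rw [← hMdef, le_div_iff₀ hα0] at h
    linarith
  have hM2 : 1 - c < ((M : ℝ) + 1) * (α / 3) := by
    have h := Nat.lt_floor_add_one (3 * (1 - c) / α)
    rw [← hMdef, div_lt_iff₀ hα0] at h
    push_cast at h ⊢
    linarith
  have hM3 : ((M : ℝ) + 1) * c < 1 := by
    have h1 : (M : ℝ) * c ≤ 3 * (1 - c) * β := by
      have := mul_le_mul_of_nonneg_right hM1 hβ0.le
      rw [hc]; nlinarith
    rw [hc]; nlinarith
  set S : ℕ → Finset ℝ := cantorAux α β M with hS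
  set d : ℕ → ℝ := fun n => α * c ^ n / 3 with hd
  have hd0 : ∀ n, 0 < d n := fun n => by
    simp only [hd]; positivity
  have hS0 : S 0 = {0} := rfl
  have hmem : ∀ n x, x ∈ S (n + 1) ↔ ∃ y ∈ S n, ∃ k, k ≤ M ∧ x = y + k * d n := by
    intro n x
    show x ∈ (S n).biUnion _ ↔ _
    simp only [Finset.mem_biUnion, Finset.mem_image, Finset.mem_range, Nat.lt_succ_iff, hd]
    constructor
    · rintro ⟨y, hy, k, hk, rfl⟩; exact ⟨y, hy, k, hk, rfl⟩
    · rintro ⟨y, hy, k, hk, rfl⟩; exact ⟨y, hy, k, hk, rfl⟩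
  have hpow : ∀ n : ℕ, (0:ℝ) < c ^ n := fun n => pow_pos hc0 n
  -- containment
  have hcont : ∀ n, ∀ x ∈ S (n + 1), ∃ y ∈ S n,
      Set.Icc x (x + c ^ (n + 1)) ⊆ Set.Icc y (y + c ^ n) := by
    intro n x hx
    obtain ⟨y, hy, k, hk, rfl⟩ := (hmem n x).1 hx
    refine ⟨y, hy, Set.Icc_subset_Icc ?_ ?_⟩
    · have : (0:ℝ) ≤ (k : ℝ) * d n := by positivity
      linarith
    · have hkM : (k : ℝ) ≤ M := Nat.cast_le.2 hk
      have h1 : (k : ℝ) * d n ≤ (M : ℝ) * d n :=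
        mul_le_mul_of_nonneg_right hkM (hd0 n).le
      have h2 : (M : ℝ) * d n ≤ (1 - c) * c ^ n := by
        simp only [hd]
        calc (M : ℝ) * (α * c ^ n / 3) = ((M : ℝ) * (α / 3)) * c ^ n := by ring
        _ ≤ (1 - c) * c ^ n := mul_le_mul_of_nonneg_right hM1 (hpow n).le
      have h3 : c ^ (n + 1) = c * c ^ n := by ring
      nlinarith [hpow n]
  -- abs helper
  have hone : ∀ k1 k2 : ℕ, k1 ≠ k2 → (1:ℝ) ≤ |(k1 : ℝ) - (k2 : ℝ)| := by
    intro k1 k2 hne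
    rcases hne.lt_or_gt with h | h
    · rw [abs_sub_comm, abs_of_nonneg (sub_nonneg.2 (by exact_mod_cast h.le))]
      have : (k1 : ℝ) + 1 ≤ k2 := by exact_mod_cast h
      linarith
    · rw [abs_of_nonneg (sub_nonneg.2 (by exact_mod_cast h.le))]
      have : (k2 : ℝ) + 1 ≤ k1 := by exact_mod_cast h
      linarith
  have habs : ∀ (D : ℝ), 0 < D → ∀ (y1 y2 : ℝ) (k1 k2 : ℕ), k1 ≤ M → k2 ≤ M →
      ((y1 = y2 ∧ k1 ≠ k2) ∨ ((M : ℝ) + 1) * D ≤ |y1 - y2|) →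
      D ≤ |y1 + k1 * D - (y2 + k2 * D)| := by
    intro D hD y1 y2 k1 k2 hk1 hk2 h
    have heq : y1 + k1 * D - (y2 + k2 * D) = (y1 - y2) + ((k1 : ℝ) - k2) * D := by ring
    rcases h with ⟨rfl, hne⟩ | hfar
    · rw [heq, sub_self, zero_add, abs_mul, abs_of_pos hD]
      nlinarith [hone k1 k2 hne]
    · have hb : |((k1 : ℝ) - k2) * D| ≤ (M : ℝ) * D := by
        rw [abs_mul, abs_of_pos hD]
        have h1 : |(k1 : ℝ) - (k2 : ℝ)| ≤ M := by
          rw [abs_sub_le_iff]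
          constructor <;>
          · have a1 : (k1 : ℝ) ≤ M := Nat.cast_le.2 hk1
            have a2 : (k2 : ℝ) ≤ M := Nat.cast_le.2 hk2
            have a3 : (0:ℝ) ≤ k1 := Nat.cast_nonneg _
            have a4 : (0:ℝ) ≤ k2 := Nat.cast_nonneg _
            linarith
        exact mul_le_mul_of_nonneg_right h1 hD.le
      have htri : |y1 - y2| ≤ |y1 + k1 * D - (y2 + k2 * D)| + |((k1 : ℝ) - k2) * D| := by
        calc |y1 - y2| = |(y1 + k1 * D - (y2 + k2 * D)) + -(((k1 : ℝ) - k2) * D)| := by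
              ring_nf
        _ ≤ |y1 + k1 * D - (y2 + k2 * D)| + |-(((k1 : ℝ) - k2) * D)| := abs_add_le _ _
        _ = |y1 + k1 * D - (y2 + k2 * D)| + |((k1 : ℝ) - k2) * D| := by rw [abs_neg]
      nlinarith
  -- separation
  have hsep : ∀ n, ∀ x ∈ S (n + 1), ∀ y ∈ S (n + 1), x ≠ y → d n ≤ |x - y| := by
    intro n
    induction n with
    | zero =>
      intro x hx y hy hne
      obtain ⟨y1, hy1, k1, hk1, rfl⟩ := (hmem 0 x).1 hx
      obtain ⟨y2, hy2, k2, hk2, rfl⟩ := (hmem 0 y).1 hy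
      rw [hS0, Finset.mem_singleton] at hy1 hy2
      subst hy1; subst hy2
      refine habs _ (hd0 0) _ _ _ _ hk1 hk2 (Or.inl ⟨rfl, fun h => hne (by rw [h])⟩)
    | succ m ih =>
      intro x hx y hy hne
      obtain ⟨y1, hy1, k1, hk1, rfl⟩ := (hmem (m+1) x).1 hx
      obtain ⟨y2, hy2, k2, hk2, rfl⟩ := (hmem (m+1) y).1 hy
      refine habs _ (hd0 (m+1)) _ _ _ _ hk1 hk2 ?_
      rcases eq_or_ne y1 y2 with rfl | hy12
      · exact Or.inl ⟨rfl, fun h => hne (by rw [h])⟩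
      · refine Or.inr ?_
        have h1 : d m ≤ |y1 - y2| := ih y1 hy1 y2 hy2 hy12
        have h2 : ((M : ℝ) + 1) * d (m + 1) ≤ d m := by
          simp only [hd]
          have : ((M : ℝ) + 1) * (α * c ^ (m + 1) / 3) =
              (((M : ℝ) + 1) * c) * (α * c ^ m / 3) := by ring
          rw [this]
          have hp : (0:ℝ) ≤ α * c ^ m / 3 := by positivity
          nlinarith [mul_le_mul_of_nonneg_right hM3.le hp]
        linarith
  -- the equality between the stated gap and d n
  have hgap : ∀ n, c ^ (n + 1) + c ^ n * (α - 3 * α * β) / 3 = d n := by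
    intro n
    simp only [hd, hc]
    ring
  have hcard : ∀ n, (S n).card ≤ (M + 1) ^ n := by
    intro n
    induction n with
    | zero => simp [hS0]
    | succ m ih =>
      have h1 : (S (m + 1)).card ≤ ∑ y ∈ S m,
          ((Finset.range (M + 1)).image
            fun k : ℕ => y + (k : ℝ) * (α * (α * β) ^ m / 3)).card :=
        Finset.card_biUnion_le
      have h2 : ∑ y ∈ S m,
          ((Finset.range (M + 1)).image
            fun k : ℕ => y + (k : ℝ) * (α * (α * β) ^ m / 3)).card
          ≤ ∑ _y ∈ S m, (M + 1) :=
        Finset.sum_le_sum fun y _ =>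
          le_trans Finset.card_image_le (le_of_eq (Finset.card_range _))
      have h3 : ∑ _y ∈ S m, (M + 1) = (S m).card * (M + 1) := by
        rw [Finset.sum_const, smul_eq_mul]
      have h4 : (S m).card * (M + 1) ≤ (M + 1) ^ m * (M + 1) :=
        Nat.mul_le_mul_right _ ih
      calc (S (m + 1)).card ≤ (S m).card * (M + 1) := by omega
      _ ≤ (M + 1) ^ m * (M + 1) := h4
      _ = (M + 1) ^ (m + 1) := (pow_succ _ _).symm
  have hvol0 : MeasureTheory.volume
      (⋂ n, ⋃ x ∈ S n, Set.Icc x (x + c ^ n)) = 0 := by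
    set r : ℝ := ((M : ℝ) + 1) * c with hr
    have hr0 : 0 ≤ r := by positivity
    have hbound : ∀ n, MeasureTheory.volume
        (⋂ i, ⋃ x ∈ S i, Set.Icc x (x + c ^ i)) ≤ ENNReal.ofReal (r ^ n) := by
      intro n
      refine le_trans (MeasureTheory.measure_mono (Set.iInter_subset _ n)) ?_
      calc MeasureTheory.volume (⋃ x ∈ S n, Set.Icc x (x + c ^ n))
          ≤ ∑ x ∈ S n, MeasureTheory.volume (Set.Icc x (x + c ^ n)) :=
            MeasureTheory.measure_biUnion_finset_le _ _
      _ = ∑ x ∈ S n, ENNReal.ofReal (c ^ n) := by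
            refine Finset.sum_congr rfl fun x _ => ?_
            rw [Real.volume_Icc, add_sub_cancel_left]
      _ = ((S n).card : ENNReal) * ENNReal.ofReal (c ^ n) := by
            rw [Finset.sum_const, nsmul_eq_mul]
      _ ≤ (((M + 1) ^ n : ℕ) : ENNReal) * ENNReal.ofReal (c ^ n) := by
            gcongr
            exact_mod_cast hcard n
      _ = ENNReal.ofReal ((((M + 1) ^ n : ℕ) : ℝ)) * ENNReal.ofReal (c ^ n) := by
            rw [ENNReal.ofReal_natCast]
      _ = ENNReal.ofReal ((((M + 1) ^ n : ℕ) : ℝ) * c ^ n) :=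
            (ENNReal.ofReal_mul (by positivity)).symm
      _ = ENNReal.ofReal (r ^ n) := by
            have hcast : (((M + 1) ^ n : ℕ) : ℝ) = ((M : ℝ) + 1) ^ n := by
              push_cast; ring
            rw [hcast, hr, ← mul_pow]
    have htend : Filter.Tendsto (fun n => ENNReal.ofReal (r ^ n))
        Filter.atTop (nhds 0) := by
      have h1 := tendsto_pow_atTop_nhds_zero_of_lt_one hr0 hM3
      have h2 := (ENNReal.continuous_ofReal.tendsto 0).comp h1
      simpa [Function.comp_def] using h2
    exact le_antisymm (ge_of_tendsto' htend hbound) zero_le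
  have hclosed : IsClosed (⋂ n, ⋃ x ∈ S n, Set.Icc x (x + c ^ n)) :=
    isClosed_iInter fun n =>
      (S n).finite_toSet.isClosed_biUnion fun x _ => isClosed_Icc
  refine ⟨S, hS0, hcont, ?_, ?_, ?_, ?_⟩
  · intro n x hx y hy hne
    rw [hgap n]
    exact hsep n x hx y hy hne
  -- two children in every window
  · intro n y hy t ht
    have hwin : y ≤ t ∧ t + α * c ^ n ≤ y + c ^ n := by
      have hle : t ≤ t + α * c ^ n := by
        have : (0:ℝ) ≤ α * c ^ n := by positivity
        linarith
      exact (Set.Icc_subset_Icc_iff hle).1 ht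
    set a : ℝ := t - y with hadef
    have ha0 : 0 ≤ a := by simp only [hadef]; linarith [hwin.1]
    have ha1 : a ≤ (1 - α) * c ^ n := by
      have h2 := hwin.2
      simp only [hadef]
      linarith [h2]
    set D : ℝ := d n with hDdef
    have hD0 : 0 < D := hd0 n
    set k : ℕ := ⌈a / D⌉₊ with hk
    have hk1 : a ≤ (k : ℝ) * D := by
      have := Nat.le_ceil (a / D)
      rw [← hk] at this
      rw [div_le_iff₀ hD0] at this
      linarith [this]
    have hk2 : (k : ℝ) * D < a + D := by
      have := Nat.ceil_lt_add_one (div_nonneg ha0 hD0.le)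
      rw [← hk] at this
      have h2 : (k : ℝ) * D < (a / D + 1) * D := by
        exact mul_lt_mul_of_pos_right this hD0
      rw [add_mul, div_mul_cancel₀ _ hD0.ne', one_mul] at h2
      exact h2
    have hcα3 : c ≤ α / 3 := by linarith
    have hDval : D = α * c ^ n / 3 := rfl
    have hkM : k + 1 ≤ M := by
      by_contra hcon
      push_neg at hcon
      have : M ≤ k := by omega
      have hMk : (M : ℝ) * D ≤ (k : ℝ) * D :=
        mul_le_mul_of_nonneg_right (Nat.cast_le.2 this) hD0.le
      have hMD : (1 - c) * c ^ n < ((M : ℝ) + 1) * D := by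
        rw [hDval]
        calc (1 - c) * c ^ n < (((M : ℝ) + 1) * (α / 3)) * c ^ n :=
              mul_lt_mul_of_pos_right hM2 (hpow n)
        _ = ((M : ℝ) + 1) * (α * c ^ n / 3) := by ring
      -- (1-c)c^n < (M+1)D = MD + D ≤ kD + D < a + 2D ≤ (1-α)c^n + 2(α/3)c^n = (1-α/3)c^n ≤ (1-c)c^n
      have hD3 : D ≤ (α / 3) * c ^ n := by rw [hDval]; linarith
      have hc3n : c * c ^ n ≤ (α / 3) * c ^ n :=
        mul_le_mul_of_nonneg_right hcα3 (hpow n).le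
      have hm1 : (1 - c) * c ^ n = c ^ n - c * c ^ n := by ring
      have hm2 : (1 - α) * c ^ n = c ^ n - α * c ^ n := by ring
      have hm3 : (α / 3) * c ^ n = α * c ^ n / 3 := by ring
      linarith
    have hx1mem : y + (k : ℝ) * D ∈ S (n + 1) :=
      (hmem n _).2 ⟨y, hy, k, by omega, rfl⟩
    have hx2mem : y + ((k + 1 : ℕ) : ℝ) * D ∈ S (n + 1) :=
      (hmem n _).2 ⟨y, hy, k + 1, hkM, rfl⟩
    refine ⟨y + (k : ℝ) * D, hx1mem, y + ((k + 1 : ℕ) : ℝ) * D, hx2mem, ?_, ?_, ?_⟩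
    · intro h
      have h2 : (k : ℝ) * D = ((k + 1 : ℕ) : ℝ) * D := by
        have := add_left_cancel h
        linarith [this]
      push_cast at h2
      have : ((k : ℝ) + 1) * D = (k : ℝ) * D + D := by ring
      linarith
    · apply Set.Icc_subset_Icc
      · simp only [hadef] at hk1; linarith
      · have hcc : c ^ (n + 1) = c * c ^ n := by ring
        have : c * c ^ n ≤ (α / 3) * c ^ n :=
          mul_le_mul_of_nonneg_right hcα3 (hpow n).le
        have hD3 : D = (α / 3) * c ^ n := by rw [hDval]; ring
        simp only [hadef] at hk2
        rw [hcc]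
        have hm : (0:ℝ) ≤ α * c ^ n := by positivity
        have hm3 : (α / 3) * c ^ n = α * c ^ n / 3 := by ring
        linarith
    · apply Set.Icc_subset_Icc
      · push_cast
        simp only [hadef] at hk1
        have : ((k : ℝ) + 1) * D = (k : ℝ) * D + D := by ring
        linarith
      · have hcc : c ^ (n + 1) = c * c ^ n := by ring
        have h5 : c * c ^ n ≤ (α / 3) * c ^ n :=
          mul_le_mul_of_nonneg_right hcα3 (hpow n).le
        have hD3 : D = (α / 3) * c ^ n := by rw [hDval]; ring
        simp only [hadef] at hk2
        rw [hcc]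
        push_cast
        have hm3 : (α / 3) * c ^ n = α * c ^ n / 3 := by ring
        have : ((k : ℝ) + 1) * D = (k : ℝ) * D + D := by ring
        linarith
  -- measure zero
  · exact hvol0
  -- nowhere dense
  · rw [hclosed.isNowhereDense_iff]
    by_contra h
    obtain ⟨x, hx⟩ := Set.nonempty_iff_ne_empty.2 h
    have hpos : 0 < MeasureTheory.volume
        (interior (⋂ n, ⋃ x ∈ S n, Set.Icc x (x + c ^ n))) :=
      isOpen_interior.measure_pos _ ⟨x, hx⟩
    have hle : MeasureTheory.volume
        (interior (⋂ n, ⋃ x ∈ S n, Set.Icc x (x + c ^ n))) ≤ 0 :=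
      hvol0 ▸ MeasureTheory.measure_mono interior_subset
    exact absurd (lt_of_lt_of_le hpos hle) (lt_irrefl _)

end Schmidt
end
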